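/- Let G be a nonempty bounded open subset of ℂ, let S ⊆ ℂ be dominating in G, and let F ⊆ ℂ be a finite set. Then S∖F is dominating in G. -/

import Mathlib

open NormedSpace Filter Topology Set

noncomputable section

/-- A set `S ⊆ ℂ` is dominating in the open set `G` if
`sup_{z ∈ G} |f z| = sup_{z ∈ S ∩ G} |f z|` for every bounded analytic function `f` on `G`. -/
def IsDominating (S G : Set ℂ) : Prop :=
  ∀ f : ℂ → ℂ, DifferentiableOn ℂ f G → BddAbove ((fun z => ‖f z‖) '' G) →
    sSup ((fun z => ‖f z‖) '' G) = sSup ((fun z => ‖f z‖) '' (S ∩ G))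

theorem dominating_sdiff_finite (G S F : Set ℂ)
    (hGopen : IsOpen G) (hGne : G.Nonempty) (hGbdd : Bornology.IsBounded G)
    (hS : IsDominating S G) (hF : F.Finite) :
    IsDominating (S \ F) G := by
  intro f hf hbdd
  set M := sSup ((fun z => ‖f z‖) '' G) with hM
  set m := sSup ((fun z => ‖f z‖) '' ((S \ F) ∩ G)) with hm
  have hne : ((fun z => ‖f z‖) '' G).Nonempty := hGne.image _
  have hM0 : 0 ≤ M := Real.sSup_nonneg (by rintro x ⟨z, _, rfl⟩; exact norm_nonneg _)
  have hm0 : 0 ≤ m := Real.sSup_nonneg (by rintro x ⟨z, _, rfl⟩; exact norm_nonneg _)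
  have hfle : ∀ z ∈ G, ‖f z‖ ≤ M := fun z hz => le_csSup hbdd ⟨z, hz, rfl⟩
  have hbdd' : BddAbove ((fun z => ‖f z‖) '' ((S \ F) ∩ G)) :=
    hbdd.mono (Set.image_mono Set.inter_subset_right)
  have hmle : ∀ z ∈ (S \ F) ∩ G, ‖f z‖ ≤ m := fun z hz => le_csSup hbdd' ⟨z, hz, rfl⟩
  -- m ≤ M
  have h1 : m ≤ M := Real.sSup_le (by rintro x ⟨z, hz, rfl⟩; exact hfle z hz.2) hM0
  refine le_antisymm ?_ h1
  by_contra hlt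
  push_neg at hlt
  -- the polynomial vanishing on F
  set p : ℂ → ℂ := fun z => ∏ a ∈ hF.toFinset, (z - a) with hp
  have hpdiff : Differentiable ℂ p := by
    apply Differentiable.fun_finsetProd
    intro a _
    exact differentiable_id.sub_const a
  -- bound for p on G
  have hKc : IsCompact (closure G) := hGbdd.isCompact_closure
  have hKbdd : BddAbove ((fun z => ‖p z‖) '' closure G) :=
    (hKc.image (hpdiff.continuous.norm)).bddAbove
  obtain ⟨C, hC⟩ := hKbdd
  have hCG : ∀ z ∈ G, ‖p z‖ ≤ C := fun z hz => hC ⟨z, subset_closure hz, rfl⟩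
  -- pick z0 ∈ G with ‖f z0‖ > m and z0 ∉ F
  have hex : ∃ x ∈ (fun z => ‖f z‖) '' G, m < x := exists_lt_of_lt_csSup hne hlt
  obtain ⟨_, ⟨z1, hz1G, rfl⟩, hz1⟩ := hex
  set U : Set ℂ := G ∩ (fun z => ‖f z‖) ⁻¹' Set.Ioi m with hU
  have hUopen : IsOpen U := hf.continuousOn.norm.isOpen_inter_preimage hGopen isOpen_Ioi
  have hUne : U.Nonempty := ⟨z1, hz1G, hz1⟩
  have hUinf : U.Infinite := by
    obtain ⟨x, hx⟩ := hUne
    exact infinite_of_mem_nhds x (hUopen.mem_nhds hx)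
  obtain ⟨z0, hz0U, hz0F⟩ := (hUinf.diff hF).nonempty
  have hz0G : z0 ∈ G := hz0U.1
  have hz0m : m < ‖f z0‖ := hz0U.2
  have hm' : 0 < ‖f z0‖ := lt_of_le_of_lt hm0 hz0m
  have hpz0 : p z0 ≠ 0 := by
    apply Finset.prod_ne_zero_iff.mpr
    intro a ha
    have : a ∈ F := hF.mem_toFinset.mp ha
    exact sub_ne_zero.mpr (fun h => hz0F (h ▸ this))
  have hc : 0 < ‖p z0‖ := norm_pos_iff.mpr hpz0
  have hcC : ‖p z0‖ ≤ C := hCG z0 hz0G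
  set C' : ℝ := max C 1 with hC'
  have hC'pos : 0 < C' := lt_of_lt_of_le one_pos (le_max_right _ _)
  -- key inequality for each n
  have key : ∀ n : ℕ, ‖f z0‖ ^ n * ‖p z0‖ ≤ m ^ n * C := by
    intro n
    set g : ℂ → ℂ := fun z => (f z) ^ n * p z with hg
    have hgdiff : DifferentiableOn ℂ g G := (hf.pow n).mul (hpdiff.differentiableOn)
    have hgbdd : BddAbove ((fun z => ‖g z‖) '' G) := by
      refine ⟨M ^ n * C, ?_⟩
      rintro x ⟨z, hz, rfl⟩
      show ‖g z‖ ≤ M ^ n * C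
      have : ‖g z‖ = ‖f z‖ ^ n * ‖p z‖ := by simp [hg, norm_mul, norm_pow]
      rw [this]
      exact mul_le_mul (pow_le_pow_left₀ (norm_nonneg _) (hfle z hz) n) (hCG z hz)
        (norm_nonneg _) (pow_nonneg hM0 n)
    have heq := hS g hgdiff hgbdd
    have hub : sSup ((fun z => ‖g z‖) '' (S ∩ G)) ≤ m ^ n * C := by
      apply Real.sSup_le
      · rintro x ⟨z, ⟨hzS, hzG⟩, rfl⟩
        by_cases hzF : z ∈ F
        · have : p z = 0 := Finset.prod_eq_zero (hF.mem_toFinset.mpr hzF) (by simp)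
          show ‖g z‖ ≤ m ^ n * C
          simp only [hg, this, mul_zero, norm_zero]
          exact mul_nonneg (pow_nonneg hm0 n) (le_trans hc.le hcC)
        · have hzm : ‖f z‖ ≤ m := hmle z ⟨⟨hzS, hzF⟩, hzG⟩
          show ‖g z‖ ≤ m ^ n * C
          have : ‖g z‖ = ‖f z‖ ^ n * ‖p z‖ := by simp [hg, norm_mul, norm_pow]
          rw [this]
          exact mul_le_mul (pow_le_pow_left₀ (norm_nonneg _) hzm n) (hCG z hzG)
            (norm_nonneg _) (pow_nonneg hm0 n)
      · exact mul_nonneg (pow_nonneg hm0 n) (le_trans hc.le hcC)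
    have hlb : ‖f z0‖ ^ n * ‖p z0‖ ≤ sSup ((fun z => ‖g z‖) '' G) := by
      have : ‖g z0‖ = ‖f z0‖ ^ n * ‖p z0‖ := by simp [hg, norm_mul, norm_pow]
      exact this ▸ le_csSup hgbdd ⟨z0, hz0G, rfl⟩
    calc ‖f z0‖ ^ n * ‖p z0‖ ≤ sSup ((fun z => ‖g z‖) '' G) := hlb
      _ = sSup ((fun z => ‖g z‖) '' (S ∩ G)) := heq
      _ ≤ m ^ n * C := hub
  -- contradiction
  obtain ⟨n, hn⟩ : ∃ n : ℕ, (m / ‖f z0‖) ^ n < ‖p z0‖ / C' :=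
    exists_pow_lt_of_lt_one (div_pos hc hC'pos) ((div_lt_one hm').mpr hz0m)
  have h2 : m ^ n * C < ‖f z0‖ ^ n * ‖p z0‖ := by
    have e1 : m ^ n = ‖f z0‖ ^ n * (m / ‖f z0‖) ^ n := by
      rw [← mul_pow, mul_div_cancel₀ _ (ne_of_gt hm')]
    calc m ^ n * C ≤ m ^ n * C' :=
          mul_le_mul_of_nonneg_left (le_max_left _ _) (pow_nonneg hm0 n)
      _ = ‖f z0‖ ^ n * ((m / ‖f z0‖) ^ n * C') := by rw [e1, mul_assoc]
      _ < ‖f z0‖ ^ n * (‖p z0‖ / C' * C') := by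
          apply mul_lt_mul_of_pos_left _ (pow_pos hm' n)
          exact mul_lt_mul_of_pos_right hn hC'pos
      _ = ‖f z0‖ ^ n * ‖p z0‖ := by rw [div_mul_cancel₀ _ (ne_of_gt hC'pos)]
  exact absurd (key n) (not_le.mpr h2)
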